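/- With ℙ = δ_{ξ₁} on a compact Ξ ⊆ ℝ^d, quadratic cost c(ξ,ζ)=|ξ−ζ|², and a continuous function f : Ξ → ℝ, the distributionally robust value sup{ ∫ f dℚ : ℚ probability on Ξ, ∫ |ξ₁−ζ|² dℚ(ζ) ≤ m } equals sup over pairs (ζ₀, ζ₁) ∈ Ξ×Ξ and t ∈ [0,1] with t|ξ₁−ζ₀|² + (1−t)|ξ₁−ζ₁|² ≤ m of t f(ζ₀) + (1−t) f(ζ₁); in particular the supremum over all admissible ℚ is attained by a measure supported on at most two points. -/
import Mathlib


open MeasureTheory Set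


/-- Sorted 3-point to 2-point reduction. -/
lemma red3_sorted (m c₁ c₂ c₃ f₁ f₂ f₃ w₁ w₂ w₃ : ℝ)
    (h12 : c₁ ≤ c₂) (h23 : c₂ ≤ c₃)
    (hw₁ : 0 ≤ w₁) (hw₂ : 0 ≤ w₂) (hw₃ : 0 ≤ w₃)
    (hsum : w₁ + w₂ + w₃ = 1)
    (hc : w₁*c₁ + w₂*c₂ + w₃*c₃ ≤ m) :
    ∃ s ∈ Icc (0:ℝ) 1, ∃ p q : ℝ × ℝ,
      (p = (c₁,f₁) ∨ p = (c₂,f₂) ∨ p = (c₃,f₃)) ∧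
      (q = (c₁,f₁) ∨ q = (c₂,f₂) ∨ q = (c₃,f₃)) ∧
      s*p.1 + (1-s)*q.1 ≤ m ∧ w₁*f₁+w₂*f₂+w₃*f₃ ≤ s*p.2 + (1-s)*q.2 := by
  rcases eq_or_lt_of_le (h12.trans h23) with hce | hlt
  · -- c₁ = c₂ = c₃
    have hc2 : c₂ = c₁ := le_antisymm (hce ▸ h23) h12
    have hc3 : c₃ = c₁ := hce.symm
    have hsc : (w₁+w₂+w₃)*c₁ = c₁ := by rw [hsum, one_mul]
    have hc1m : c₁ ≤ m := by rw [hc2, hc3] at hc; linarith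
    have key : ∀ F : ℝ, f₁ ≤ F → f₂ ≤ F → f₃ ≤ F →
        (F = f₁ ∨ F = f₂ ∨ F = f₃) →
        ∃ s ∈ Icc (0:ℝ) 1, ∃ p q : ℝ × ℝ,
        (p = (c₁,f₁) ∨ p = (c₂,f₂) ∨ p = (c₃,f₃)) ∧
        (q = (c₁,f₁) ∨ q = (c₂,f₂) ∨ q = (c₃,f₃)) ∧
        s*p.1 + (1-s)*q.1 ≤ m ∧ w₁*f₁+w₂*f₂+w₃*f₃ ≤ s*p.2 + (1-s)*q.2 := by
      intro F hF1 hF2 hF3 hFmem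
      have hval : w₁*f₁+w₂*f₂+w₃*f₃ ≤ F := by
        have hsF : (w₁+w₂+w₃)*F = F := by rw [hsum, one_mul]
        have := mul_le_mul_of_nonneg_left hF1 hw₁
        have := mul_le_mul_of_nonneg_left hF2 hw₂
        have := mul_le_mul_of_nonneg_left hF3 hw₃
        linarith
      refine ⟨1, ⟨zero_le_one, le_refl 1⟩, (c₁, F), (c₁, F), ?_, ?_, by simpa using hc1m,
        by simpa using hval⟩ <;>
      · rcases hFmem with h | h | h
        · exact Or.inl (by rw [h])
        · exact Or.inr (Or.inl (by rw [h, hc2]))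
        · exact Or.inr (Or.inr (by rw [h, hc3]))
    rcases le_total f₁ f₂ with h' | h'
    · rcases le_total f₂ f₃ with h'' | h''
      · exact key f₃ (h'.trans h'') h'' le_rfl (Or.inr (Or.inr rfl))
      · exact key f₂ h' le_rfl h'' (Or.inr (Or.inl rfl))
    · rcases le_total f₁ f₃ with h'' | h''
      · exact key f₃ h'' ((h''.trans' h')) le_rfl (Or.inr (Or.inr rfl))
      · exact key f₁ le_rfl h' h'' (Or.inl rfl)
  · -- c₁ < c₃
    obtain ⟨lam, hlam0, hlam1, hlamc⟩ :
        ∃ lam, 0 ≤ lam ∧ lam ≤ 1 ∧ c₂ = lam * c₁ + (1-lam) * c₃ := by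
      have hd : (0:ℝ) < c₃ - c₁ := by linarith
      refine ⟨(c₃ - c₂)/(c₃ - c₁), div_nonneg (by linarith) hd.le, ?_, ?_⟩
      · rw [div_le_one hd]; linarith
      · field_simp; ring
    rcases le_total f₂ (lam * f₁ + (1-lam) * f₃) with hf2 | hf2
    · -- spread point 2 onto 1 and 3 : pair (1,3), s = w₁ + lam*w₂
      have h1s : 1 - (w₁ + lam*w₂) = (1-lam)*w₂ + w₃ := by
        have : (1-lam)*w₂ = w₂ - lam*w₂ := by ring
        linarith
      refine ⟨w₁ + lam * w₂, ⟨by positivity, ?_⟩, (c₁,f₁), (c₃,f₃),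
        Or.inl rfl, Or.inr (Or.inr rfl), ?_, ?_⟩
      · have : 0 ≤ (1-lam)*w₂ := mul_nonneg (by linarith) hw₂
        linarith
      · simp only [h1s]
        have hcc := hc
        rw [hlamc] at hcc
        have hexp : (w₁ + lam*w₂)*c₁ + ((1-lam)*w₂ + w₃)*c₃
            = w₁*c₁ + w₂*(lam*c₁ + (1-lam)*c₃) + w₃*c₃ := by ring
        rw [hexp]; exact hcc
      · simp only [h1s]
        have hv := mul_le_mul_of_nonneg_left hf2 hw₂
        have hexp : (w₁ + lam*w₂)*f₁ + ((1-lam)*w₂ + w₃)*f₃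
            = w₁*f₁ + w₂*(lam*f₁ + (1-lam)*f₃) + w₃*f₃ := by ring
        rw [hexp]; linarith
    · rcases le_total (w₁ * (1-lam)) (w₃ * lam) with hcase | hcase
      · -- deplete w₁ : pair (2,3), s = w₂ + β with lam*β = w₁
        obtain ⟨β, hβ0, hlb, h1b⟩ :
            ∃ β, 0 ≤ β ∧ lam * β = w₁ ∧ (1-lam) * β ≤ w₃ := by
          rcases eq_or_lt_of_le hlam0 with h0 | h0
          · have hw10 : w₁ = 0 := le_antisymm (by nlinarith) hw₁
            exact ⟨0, le_rfl, by rw [hw10, mul_zero], by simpa using hw₃⟩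
          · refine ⟨w₁ / lam, div_nonneg hw₁ hlam0, by field_simp, ?_⟩
            rw [mul_comm, div_mul_eq_mul_div, div_le_iff₀ h0]
            nlinarith
        have h1s : 1 - (w₂ + β) = w₃ - (1-lam)*β := by
          have h1 : (1-lam)*β = β - lam*β := by ring
          linarith
        refine ⟨w₂ + β, ⟨by positivity, ?_⟩, (c₂,f₂), (c₃,f₃),
          Or.inr (Or.inl rfl), Or.inr (Or.inr rfl), ?_, ?_⟩
        · linarith
        · simp only [h1s]
          have hcc := hc
          rw [hlamc] at hcc
          have hc1 : lam*β*c₁ = w₁*c₁ := by rw [hlb]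
          have hexp : (w₂+β)*(lam*c₁+(1-lam)*c₃) + (w₃ - (1-lam)*β)*c₃
              = w₂*(lam*c₁+(1-lam)*c₃) + w₃*c₃ + lam*β*c₁ := by ring
          rw [hlamc, hexp, hc1]; linarith
        · simp only [h1s]
          have hv := mul_le_mul_of_nonneg_left hf2 hβ0
          have hf1 : lam*β*f₁ = w₁*f₁ := by rw [hlb]
          nlinarith [hv, hf1]
      · -- deplete w₃ : pair (1,2), s = w₁ - lam*β with (1-lam)*β = w₃
        obtain ⟨β, hβ0, hlb, h1b⟩ :
            ∃ β, 0 ≤ β ∧ (1-lam) * β = w₃ ∧ lam * β ≤ w₁ := by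
          rcases eq_or_lt_of_le hlam1 with h0 | h0
          · have hw30 : w₃ = 0 := le_antisymm (by nlinarith) hw₃
            exact ⟨0, le_rfl, by rw [hw30, mul_zero], by simpa using hw₁⟩
          · have hpos : (0:ℝ) < 1 - lam := by linarith
            refine ⟨w₃ / (1-lam), div_nonneg hw₃ hpos.le, by field_simp, ?_⟩
            rw [mul_comm, div_mul_eq_mul_div, div_le_iff₀ hpos]
            nlinarith
        have h1s : 1 - (w₁ - lam*β) = w₂ + β := by
          have h1 : (1-lam)*β = β - lam*β := by ring
          linarith
        refine ⟨w₁ - lam * β, ⟨by linarith, ?_⟩, (c₁,f₁), (c₂,f₂),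
          Or.inl rfl, Or.inr (Or.inl rfl), ?_, ?_⟩
        · nlinarith
        · simp only [h1s]
          have hcc := hc
          rw [hlamc] at hcc
          have hc3' : (1-lam)*β*c₃ = w₃*c₃ := by rw [hlb]
          have hexp : (w₁ - lam*β)*c₁ + (w₂+β)*(lam*c₁+(1-lam)*c₃)
              = w₁*c₁ + w₂*(lam*c₁+(1-lam)*c₃) + (1-lam)*β*c₃ := by ring
          rw [hlamc, hexp, hc3']; linarith
        · simp only [h1s]
          have hv := mul_le_mul_of_nonneg_left hf2 hβ0
          have hf3 : (1-lam)*β*f₃ = w₃*f₃ := by rw [hlb]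
          nlinarith [hv, hf3]

/-- 3-point to 2-point reduction, no ordering assumption. -/
lemma red3 (m c₁ c₂ c₃ f₁ f₂ f₃ w₁ w₂ w₃ : ℝ)
    (hw₁ : 0 ≤ w₁) (hw₂ : 0 ≤ w₂) (hw₃ : 0 ≤ w₃)
    (hsum : w₁ + w₂ + w₃ = 1)
    (hc : w₁*c₁ + w₂*c₂ + w₃*c₃ ≤ m) :
    ∃ s ∈ Icc (0:ℝ) 1, ∃ p q : ℝ × ℝ,
      (p = (c₁,f₁) ∨ p = (c₂,f₂) ∨ p = (c₃,f₃)) ∧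
      (q = (c₁,f₁) ∨ q = (c₂,f₂) ∨ q = (c₃,f₃)) ∧
      s*p.1 + (1-s)*q.1 ≤ m ∧ w₁*f₁+w₂*f₂+w₃*f₃ ≤ s*p.2 + (1-s)*q.2 := by
  rcases le_total c₁ c₂ with h12 | h12 <;> rcases le_total c₂ c₃ with h23 | h23 <;>
    rcases le_total c₁ c₃ with h13 | h13
  · obtain ⟨s, hs, p, q, hp, hq, h1, h2⟩ :=
      red3_sorted m c₁ c₂ c₃ f₁ f₂ f₃ w₁ w₂ w₃ h12 h23 hw₁ hw₂ hw₃ hsum hc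
    exact ⟨s, hs, p, q, by tauto, by tauto, h1, by linarith⟩
  · obtain ⟨s, hs, p, q, hp, hq, h1, h2⟩ :=
      red3_sorted m c₁ c₂ c₃ f₁ f₂ f₃ w₁ w₂ w₃ h12 h23 hw₁ hw₂ hw₃ hsum hc
    exact ⟨s, hs, p, q, by tauto, by tauto, h1, by linarith⟩
  · obtain ⟨s, hs, p, q, hp, hq, h1, h2⟩ :=
      red3_sorted m c₁ c₃ c₂ f₁ f₃ f₂ w₁ w₃ w₂ h13 h23 hw₁ hw₃ hw₂ (by linarith)
        (by linarith)
    exact ⟨s, hs, p, q, by tauto, by tauto, h1, by linarith⟩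
  · obtain ⟨s, hs, p, q, hp, hq, h1, h2⟩ :=
      red3_sorted m c₃ c₁ c₂ f₃ f₁ f₂ w₃ w₁ w₂ h13 h12 hw₃ hw₁ hw₂ (by linarith)
        (by linarith)
    exact ⟨s, hs, p, q, by tauto, by tauto, h1, by linarith⟩
  · obtain ⟨s, hs, p, q, hp, hq, h1, h2⟩ :=
      red3_sorted m c₂ c₁ c₃ f₂ f₁ f₃ w₂ w₁ w₃ h12 h13 hw₂ hw₁ hw₃ (by linarith)
        (by linarith)
    exact ⟨s, hs, p, q, by tauto, by tauto, h1, by linarith⟩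
  · obtain ⟨s, hs, p, q, hp, hq, h1, h2⟩ :=
      red3_sorted m c₂ c₃ c₁ f₂ f₃ f₁ w₂ w₃ w₁ h23 h13 hw₂ hw₃ hw₁ (by linarith)
        (by linarith)
    exact ⟨s, hs, p, q, by tauto, by tauto, h1, by linarith⟩
  · obtain ⟨s, hs, p, q, hp, hq, h1, h2⟩ :=
      red3_sorted m c₃ c₂ c₁ f₃ f₂ f₁ w₃ w₂ w₁ h23 h12 hw₃ hw₂ hw₁ (by linarith)
        (by linarith)
    exact ⟨s, hs, p, q, by tauto, by tauto, h1, by linarith⟩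
  · obtain ⟨s, hs, p, q, hp, hq, h1, h2⟩ :=
      red3_sorted m c₃ c₂ c₁ f₃ f₂ f₁ w₃ w₂ w₁ h23 h12 hw₃ hw₂ hw₁ (by linarith)
        (by linarith)
    exact ⟨s, hs, p, q, by tauto, by tauto, h1, by linarith⟩


lemma extract3 {K : Set (ℝ × ℝ)} {x : ℝ × ℝ} (hx : x ∈ convexHull ℝ K) :
    ∃ q₁ q₂ q₃ : ℝ × ℝ, q₁ ∈ K ∧ q₂ ∈ K ∧ q₃ ∈ K ∧ ∃ w₁ w₂ w₃ : ℝ,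
      0 ≤ w₁ ∧ 0 ≤ w₂ ∧ 0 ≤ w₃ ∧ w₁ + w₂ + w₃ = 1 ∧
      w₁ • q₁ + w₂ • q₂ + w₃ • q₃ = x := by
  obtain ⟨ι, hι, z, w, hzK, hai, hw0, hw1, hwx⟩ := eq_pos_convex_span_of_mem_convexHull hx
  have hzK' : ∀ i, z i ∈ K := fun i => hzK ⟨i, rfl⟩
  have hcard : Fintype.card ι ≤ 3 := by
    have h1 := hai.card_le_finrank_succ
    have h2 : Module.finrank ℝ (vectorSpan ℝ (Set.range z)) ≤ Module.finrank ℝ (ℝ × ℝ) :=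
      Submodule.finrank_le _
    have h3 : Module.finrank ℝ (ℝ × ℝ) = 2 := by
      simp [Module.finrank_prod]
    omega
  obtain ⟨n, hn⟩ : ∃ n, Fintype.card ι = n := ⟨_, rfl⟩
  have e : ι ≃ Fin n := hn ▸ Fintype.equivFin ι
  have hs1 : ∑ j : Fin n, w (e.symm j) = 1 := by
    rw [Equiv.sum_comp e.symm w]; exact hw1
  have hsx : ∑ j : Fin n, w (e.symm j) • z (e.symm j) = x := by
    rw [Equiv.sum_comp e.symm (fun i => w i • z i)]; exact hwx
  have hw0' : ∀ j, 0 ≤ w (e.symm j) := fun j => (hw0 _).le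
  have hn3 : n = 0 ∨ n = 1 ∨ n = 2 ∨ n = 3 := by omega
  rcases hn3 with h | h | h | h <;> subst h
  · exfalso; simp at hs1
  · refine ⟨z (e.symm 0), z (e.symm 0), z (e.symm 0), hzK' _, hzK' _, hzK' _,
      w (e.symm 0), 0, 0, hw0' 0, le_rfl, le_rfl, ?_, ?_⟩
    · rw [Fin.sum_univ_one] at hs1; linarith
    · rw [Fin.sum_univ_one] at hsx
      simpa using hsx
  · refine ⟨z (e.symm 0), z (e.symm 1), z (e.symm 1), hzK' _, hzK' _, hzK' _,
      w (e.symm 0), w (e.symm 1), 0, hw0' 0, hw0' 1, le_rfl, ?_, ?_⟩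
    · rw [Fin.sum_univ_two] at hs1; linarith
    · rw [Fin.sum_univ_two] at hsx
      simpa using hsx
  · refine ⟨z (e.symm 0), z (e.symm 1), z (e.symm 2), hzK' _, hzK' _, hzK' _,
      w (e.symm 0), w (e.symm 1), w (e.symm 2), hw0' 0, hw0' 1, hw0' 2, ?_, ?_⟩
    · rw [Fin.sum_univ_three] at hs1; linarith
    · rw [Fin.sum_univ_three] at hsx; exact hsx



lemma combo_mem_convexHull {K : Set (ℝ × ℝ)} {q₁ q₂ q₃ : ℝ × ℝ}
    (h₁ : q₁ ∈ K) (h₂ : q₂ ∈ K) (h₃ : q₃ ∈ K) {w₁ w₂ w₃ : ℝ}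
    (hw₁ : 0 ≤ w₁) (hw₂ : 0 ≤ w₂) (hw₃ : 0 ≤ w₃) (hsum : w₁ + w₂ + w₃ = 1) :
    w₁ • q₁ + w₂ • q₂ + w₃ • q₃ ∈ convexHull ℝ K := by
  have := (convex_convexHull ℝ K).sum_mem (t := (Finset.univ : Finset (Fin 3)))
    (w := ![w₁, w₂, w₃]) (z := ![q₁, q₂, q₃])
    (fun i _ => by fin_cases i <;> simpa)
    (by simp [Fin.sum_univ_three, hsum])
    (fun i _ => by
      fin_cases i <;> exact subset_convexHull ℝ K (by assumption))
  simpa [Fin.sum_univ_three] using this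

lemma isCompact_convexHull_plane {K : Set (ℝ × ℝ)} (hK : IsCompact K) :
    IsCompact (convexHull ℝ K) := by
  rcases K.eq_empty_or_nonempty with rfl | hne
  · simp
  set T : Set ((ℝ × ℝ) × (ℝ × ℝ) × (ℝ × ℝ) × ℝ × ℝ × ℝ) :=
    (K ×ˢ K ×ˢ K ×ˢ (Icc (0:ℝ) 1) ×ˢ (Icc (0:ℝ) 1) ×ˢ (Icc (0:ℝ) 1)) ∩
      {x | x.2.2.2.1 + x.2.2.2.2.1 + x.2.2.2.2.2 = 1} with hT
  set φ : (ℝ × ℝ) × (ℝ × ℝ) × (ℝ × ℝ) × ℝ × ℝ × ℝ → ℝ × ℝ :=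
    fun x => x.2.2.2.1 • x.1 + x.2.2.2.2.1 • x.2.1 + x.2.2.2.2.2 • x.2.2.1 with hφ
  have hTc : IsCompact T := by
    apply IsCompact.inter_right
    · exact hK.prod (hK.prod (hK.prod ((isCompact_Icc).prod
        ((isCompact_Icc).prod isCompact_Icc))))
    · exact isClosed_eq (by fun_prop) continuous_const
  have hφc : Continuous φ := by fun_prop
  have himg : φ '' T = convexHull ℝ K := by
    apply Subset.antisymm
    · rintro - ⟨x, ⟨⟨h1, h2, h3, h4, h5, h6⟩, hsum⟩, rfl⟩
      exact combo_mem_convexHull h1 h2 h3 h4.1 h5.1 h6.1 hsum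
    · intro x hx
      obtain ⟨q₁, q₂, q₃, h₁, h₂, h₃, w₁, w₂, w₃, hw₁, hw₂, hw₃, hsum, hwx⟩ := extract3 hx
      exact ⟨(q₁, q₂, q₃, w₁, w₂, w₃),
        ⟨⟨h₁, h₂, h₃, ⟨hw₁, by linarith⟩, ⟨hw₂, by linarith⟩, ⟨hw₃, by linarith⟩⟩, hsum⟩, hwx⟩
  rw [← himg]
  exact hTc.image hφc



/-- With `ℙ = δ_{ξ₁}` on a nonempty compact convex `Ξ ⊆ ℝ^d`, quadratic cost and `f`
continuous, the distributionally robust value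
`sup { ∫ f dℚ : ℚ probability on Ξ, ∫ |ξ₁ - ζ|² dℚ(ζ) ≤ m }` equals the supremum over
pairs `(ζ₀, ζ₁) ∈ Ξ × Ξ` and `t ∈ [0,1]` with `t |ξ₁ - ζ₀|² + (1-t) |ξ₁ - ζ₁|² ≤ m` of
`t f(ζ₀) + (1-t) f(ζ₁)`; in particular the supremum is attained by a measure supported on
at most two points. -/
theorem dro_dirac_two_point {d : ℕ} (Ξ : Set (EuclideanSpace ℝ (Fin d)))
    (hΞc : IsCompact Ξ) (hconv : Convex ℝ Ξ) (hne : Ξ.Nonempty)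
    (ξ₁ : Ξ) (m : ℝ) (hm : 0 ≤ m) (f : Ξ → ℝ) (hf : Continuous f) :
    sSup {r : ℝ | ∃ Q : Measure Ξ, IsProbabilityMeasure Q ∧
        (∫ ζ : Ξ, ‖(ξ₁ : EuclideanSpace ℝ (Fin d)) - (ζ : EuclideanSpace ℝ (Fin d))‖ ^ 2 ∂Q) ≤ m ∧
        r = ∫ ζ, f ζ ∂Q}
      = sSup {r : ℝ | ∃ ζ₀ ζ₁ : Ξ, ∃ t ∈ Set.Icc (0 : ℝ) 1,
          t * ‖(ξ₁ : EuclideanSpace ℝ (Fin d)) - (ζ₀ : EuclideanSpace ℝ (Fin d))‖ ^ 2 +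
            (1 - t) * ‖(ξ₁ : EuclideanSpace ℝ (Fin d)) - (ζ₁ : EuclideanSpace ℝ (Fin d))‖ ^ 2 ≤ m ∧
          r = t * f ζ₀ + (1 - t) * f ζ₁} ∧
    ∃ ζ₀ ζ₁ : Ξ, ∃ t ∈ Set.Icc (0 : ℝ) 1,
      t * ‖(ξ₁ : EuclideanSpace ℝ (Fin d)) - (ζ₀ : EuclideanSpace ℝ (Fin d))‖ ^ 2 +
        (1 - t) * ‖(ξ₁ : EuclideanSpace ℝ (Fin d)) - (ζ₁ : EuclideanSpace ℝ (Fin d))‖ ^ 2 ≤ m ∧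
      (∫ ζ, f ζ ∂(ENNReal.ofReal t • Measure.dirac ζ₀ + ENNReal.ofReal (1 - t) • Measure.dirac ζ₁))
        = sSup {r : ℝ | ∃ Q : Measure Ξ, IsProbabilityMeasure Q ∧
            (∫ ζ : Ξ, ‖(ξ₁ : EuclideanSpace ℝ (Fin d)) - (ζ : EuclideanSpace ℝ (Fin d))‖ ^ 2 ∂Q) ≤ m ∧
            r = ∫ ζ, f ζ ∂Q} := by
  haveI : CompactSpace ↥Ξ := isCompact_iff_compactSpace.mp hΞc
  haveI : Nonempty ↥Ξ := hne.to_subtype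
  set cost : ↥Ξ → ℝ :=
    fun ζ => ‖(ξ₁ : EuclideanSpace ℝ (Fin d)) - (ζ : EuclideanSpace ℝ (Fin d))‖ ^ 2 with hcost_def
  have hcost_cont : Continuous cost := by
    apply Continuous.pow
    exact (continuous_const.sub continuous_subtype_val).norm
  -- integrability of continuous functions
  have hint : ∀ (g : ↥Ξ → ℝ), Continuous g → ∀ (μ : Measure ↥Ξ), IsFiniteMeasure μ →
      Integrable g μ := fun g hg μ hμ =>
    hg.integrable_of_hasCompactSupport (HasCompactSupport.of_compactSpace g)
  -- two point measures
  have htp : ∀ (ζ₀ ζ₁ : ↥Ξ) (t : ℝ), t ∈ Icc (0:ℝ) 1 →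
      IsProbabilityMeasure
        (ENNReal.ofReal t • Measure.dirac ζ₀ + ENNReal.ofReal (1 - t) • Measure.dirac ζ₁) ∧
      ∀ (g : ↥Ξ → ℝ), Continuous g →
        (∫ ζ, g ζ ∂(ENNReal.ofReal t • Measure.dirac ζ₀ +
          ENNReal.ofReal (1 - t) • Measure.dirac ζ₁)) = t * g ζ₀ + (1 - t) * g ζ₁ := by
    intro ζ₀ ζ₁ t ht
    have h1t : (0:ℝ) ≤ 1 - t := by linarith [ht.2]
    haveI i0 : IsFiniteMeasure (ENNReal.ofReal t • (Measure.dirac ζ₀ : Measure ↥Ξ)) := by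
      constructor
      simp [Measure.smul_apply, smul_eq_mul]
    haveI i1 : IsFiniteMeasure (ENNReal.ofReal (1-t) • (Measure.dirac ζ₁ : Measure ↥Ξ)) := by
      constructor
      simp [Measure.smul_apply, smul_eq_mul]
    constructor
    · constructor
      simp [Measure.add_apply, Measure.smul_apply, smul_eq_mul]
      rw [← ENNReal.ofReal_add ht.1 h1t]
      norm_num
    · intro g hg
      rw [integral_add_measure (hint g hg _ i0) (hint g hg _ i1),
        integral_smul_measure, integral_smul_measure,
        integral_dirac' _ _ hg.stronglyMeasurable, integral_dirac' _ _ hg.stronglyMeasurable,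
        ENNReal.toReal_ofReal ht.1, ENNReal.toReal_ofReal h1t, smul_eq_mul, smul_eq_mul]
  -- the compact feasible region for pairs
  set D : Set ((↥Ξ × ↥Ξ) × ℝ) :=
    {x | x.2 ∈ Icc (0:ℝ) 1 ∧ x.2 * cost x.1.1 + (1 - x.2) * cost x.1.2 ≤ m} with hD_def
  set val : (↥Ξ × ↥Ξ) × ℝ → ℝ := fun x => x.2 * f x.1.1 + (1 - x.2) * f x.1.2 with hval_def
  have hval_cont : Continuous val := by fun_prop
  have hDc : IsCompact D := by
    have hclosed : IsClosed D := by
      rw [hD_def]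
      simp only [setOf_and]
      apply IsClosed.inter
      · exact (isClosed_Icc).preimage (continuous_snd)
      · exact isClosed_le (by fun_prop) continuous_const
    have hsub : D ⊆ (univ ×ˢ Icc (0:ℝ) 1) := fun x hx => ⟨mem_univ _, hx.1⟩
    exact (((isCompact_univ).prod isCompact_Icc).of_isClosed_subset hclosed hsub)
  have hDne : D.Nonempty := by
    refine ⟨((ξ₁, ξ₁), 1), ⟨zero_le_one, le_refl 1⟩, ?_⟩
    simp [hcost_def]
    exact hm
  obtain ⟨x₀, hx₀D, hx₀max⟩ := hDc.exists_isMaxOn hDne hval_cont.continuousOn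
  have hx₀max' : ∀ y ∈ D, val y ≤ val x₀ := fun y hy => hx₀max hy
  obtain ⟨⟨ζ₀', ζ₁'⟩, t'⟩ := x₀
  have htD : t' ∈ Icc (0:ℝ) 1 := hx₀D.1
  have hcD : t' * cost ζ₀' + (1 - t') * cost ζ₁' ≤ m := hx₀D.2
  set v : ℝ := t' * f ζ₀' + (1 - t') * f ζ₁' with hv_def
  -- upper bound for all feasible measures
  have hub : ∀ (Q : Measure ↥Ξ), IsProbabilityMeasure Q →
      (∫ ζ, cost ζ ∂Q) ≤ m → (∫ ζ, f ζ ∂Q) ≤ v := by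
    intro Q hQ hQm
    set g : ↥Ξ → ℝ × ℝ := fun ζ => (cost ζ, f ζ) with hg_def
    have hg_cont : Continuous g := hcost_cont.prodMk hf
    have hKc : IsCompact (range g) := isCompact_range hg_cont
    have hclosed : IsClosed (convexHull ℝ (range g)) := (isCompact_convexHull_plane hKc).isClosed
    have hci : Integrable cost Q := hint _ hcost_cont Q inferInstance
    have hfi : Integrable f Q := hint _ hf Q inferInstance
    have hgi : Integrable g Q := hci.prodMk hfi
    have hmem : (∫ ζ, g ζ ∂Q) ∈ convexHull ℝ (range g) :=
      (convex_convexHull ℝ _).integral_mem hclosed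
        (ae_of_all _ fun ζ => subset_convexHull ℝ _ (mem_range_self ζ)) hgi
    rw [integral_pair hci hfi] at hmem
    obtain ⟨q₁, q₂, q₃, hq₁, hq₂, hq₃, w₁, w₂, w₃, hw₁, hw₂, hw₃, hsum, hwx⟩ := extract3 hmem
    obtain ⟨ζa, rfl⟩ := hq₁
    obtain ⟨ζb, rfl⟩ := hq₂
    obtain ⟨ζc, rfl⟩ := hq₃
    have hwx1 : w₁ * cost ζa + w₂ * cost ζb + w₃ * cost ζc = ∫ ζ, cost ζ ∂Q := by
      have := congrArg Prod.fst hwx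
      simpa [hg_def] using this
    have hwx2 : w₁ * f ζa + w₂ * f ζb + w₃ * f ζc = ∫ ζ, f ζ ∂Q := by
      have := congrArg Prod.snd hwx
      simpa [hg_def] using this
    obtain ⟨s, hs, p, q, hp, hq, hpq, hval2⟩ :=
      red3 m (cost ζa) (cost ζb) (cost ζc) (f ζa) (f ζb) (f ζc) w₁ w₂ w₃ hw₁ hw₂ hw₃ hsum
        (by rw [hwx1]; exact hQm)
    obtain ⟨ζp, hp1, hp2⟩ : ∃ ζp, p.1 = cost ζp ∧ p.2 = f ζp := by
      rcases hp with h | h | h <;> exact ⟨_, by rw [h], by rw [h]⟩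
    obtain ⟨ζq, hq1, hq2⟩ : ∃ ζq, q.1 = cost ζq ∧ q.2 = f ζq := by
      rcases hq with h | h | h <;> exact ⟨_, by rw [h], by rw [h]⟩
    have hmemD : ((ζp, ζq), s) ∈ D := ⟨hs, by rw [← hp1, ← hq1]; exact hpq⟩
    have hle := hx₀max' _ hmemD
    calc (∫ ζ, f ζ ∂Q) = w₁ * f ζa + w₂ * f ζb + w₃ * f ζc := hwx2.symm
      _ ≤ s * p.2 + (1-s) * q.2 := hval2
      _ = s * f ζp + (1-s) * f ζq := by rw [hp2, hq2]
      _ ≤ v := hle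
  -- the optimal two-point measure
  obtain ⟨hprob0, hint0⟩ := htp ζ₀' ζ₁' t' htD
  set Q₀ : Measure ↥Ξ :=
    ENNReal.ofReal t' • Measure.dirac ζ₀' + ENNReal.ofReal (1 - t') • Measure.dirac ζ₁'
    with hQ₀_def
  have hQ₀cost : (∫ ζ, cost ζ ∂Q₀) ≤ m := by
    rw [hint0 cost hcost_cont]; exact hcD
  have hQ₀f : (∫ ζ, f ζ ∂Q₀) = v := hint0 f hf
  -- sSup of the measure set is v
  have hSgreat : IsGreatest {r : ℝ | ∃ Q : Measure ↥Ξ, IsProbabilityMeasure Q ∧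
      (∫ ζ : ↥Ξ, cost ζ ∂Q) ≤ m ∧ r = ∫ ζ, f ζ ∂Q} v := by
    constructor
    · exact ⟨Q₀, hprob0, hQ₀cost, hQ₀f.symm⟩
    · rintro r ⟨Q, hQ, hQm, rfl⟩
      exact hub Q hQ hQm
  have hS₂great : IsGreatest {r : ℝ | ∃ ζ₀ ζ₁ : ↥Ξ, ∃ t ∈ Set.Icc (0 : ℝ) 1,
      t * cost ζ₀ + (1 - t) * cost ζ₁ ≤ m ∧ r = t * f ζ₀ + (1 - t) * f ζ₁} v := by
    constructor
    · exact ⟨ζ₀', ζ₁', t', htD, hcD, rfl⟩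
    · rintro r ⟨ζ₀, ζ₁, t, ht, hcm, rfl⟩
      exact hx₀max' ((ζ₀, ζ₁), t) ⟨ht, hcm⟩
  have e1 : sSup {r : ℝ | ∃ Q : Measure ↥Ξ, IsProbabilityMeasure Q ∧
      (∫ ζ : ↥Ξ, cost ζ ∂Q) ≤ m ∧ r = ∫ ζ, f ζ ∂Q} = v := hSgreat.csSup_eq
  have e2 : sSup {r : ℝ | ∃ ζ₀ ζ₁ : ↥Ξ, ∃ t ∈ Set.Icc (0 : ℝ) 1,
      t * cost ζ₀ + (1 - t) * cost ζ₁ ≤ m ∧ r = t * f ζ₀ + (1 - t) * f ζ₁} = v :=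
    hS₂great.csSup_eq
  refine ⟨?_, ζ₀', ζ₁', t', htD, hcD, ?_⟩
  · rw [e1, e2]
  · rw [e1]
    exact hQ₀f
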